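/- Let σ be a finite Borel measure on ℝ and let p, h : ℝ → ℝ be continuous with p(x) = x·h(x) for all x. Set h_p(x) = (p(x)² + h(x)²)/(p(x)² + 1) and let σ^p be the pushforward under p of the measure with density h_p with respect to σ. Then σ^p({0}) = h(0)²·σ({0}). -/

import Mathlib

open MeasureTheory

/-- Let `σ` be a finite Borel measure on `ℝ` and `p, h` continuous with `p(x) = x·h(x)`.
With `h_p(x) = (p(x)² + h(x)²)/(p(x)² + 1)` and `σ^p` the pushforward under `p` of the
measure `h_p·σ`, one has `σ^p({0}) = h(0)²·σ({0})`. -/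
theorem stmt11 (σ : Measure ℝ) [IsFiniteMeasure σ] (p h : ℝ → ℝ)
    (hp : Continuous p) (hh : Continuous h) (hph : ∀ x, p x = x * h x) :
    (Measure.map p
        (σ.withDensity fun x => ENNReal.ofReal ((p x ^ 2 + h x ^ 2) / (p x ^ 2 + 1)))) {0}
      = ENNReal.ofReal (h 0 ^ 2) * σ {0} := by
  have hpm : Measurable p := hp.measurable
  have hS : MeasurableSet (p ⁻¹' {0}) := hpm (measurableSet_singleton 0)
  have h0 : ({0} : Set ℝ) ⊆ p ⁻¹' {0} := by
    intro x hx
    simp only [Set.mem_singleton_iff] at hx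
    simp [Set.mem_preimage, hx, hph 0]
  rw [Measure.map_apply hpm (measurableSet_singleton 0), withDensity_apply _ hS]
  calc ∫⁻ x in p ⁻¹' {0}, ENNReal.ofReal ((p x ^ 2 + h x ^ 2) / (p x ^ 2 + 1)) ∂σ
      = ∫⁻ x in p ⁻¹' {0},
          ({0} : Set ℝ).indicator (fun _ => ENNReal.ofReal (h 0 ^ 2)) x ∂σ := by
        refine setLIntegral_congr_fun hS (fun x hx => ?_)
        have hx0 : p x = 0 := hx
        by_cases hx1 : x = 0
        · subst hx1; simp [hx0]
        · have hhx : h x = 0 := by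
            have h2 := hph x
            rw [hx0] at h2
            rcases mul_eq_zero.mp h2.symm with h1 | h1
            · exact absurd h1 hx1
            · exact h1
          simp [Set.indicator_of_notMem, hx1, hx0, hhx]
    _ = ENNReal.ofReal (h 0 ^ 2) * σ {0} := by
        rw [lintegral_indicator (measurableSet_singleton 0), setLIntegral_const,
          Measure.restrict_apply (measurableSet_singleton 0),
          Set.inter_eq_left.mpr h0]
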